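/- For the Walsh anti-Wick quantization Op_{k,ℓ} and any two Lipschitz observables f, g on the symbolic space Σ, one has ‖Op_{k,ℓ}(fg) − Op_{k,ℓ}(f)Op_{k,ℓ}(g)‖ ≤ ‖f‖_Lip ‖g‖_Lip D^{-min(ℓ, k-ℓ)}. Moreover Op_{k,ℓ}(f̄) = Op_{k,ℓ}(f)* and tr Op_{k,ℓ}(f) = D^k ∫ f dx. -/

import Mathlib

open scoped BigOperators Classical Matrix
open MeasureTheory

/-- The `D`-dimensional discrete Fourier transform, with entries
`(F_D)_{jk} = D^{-1/2} e^{-2πi jk/D}`. -/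
noncomputable def dft (D : ℕ) : Matrix (Fin D) (Fin D) ℂ :=
  fun j k => (1 / Real.sqrt D : ℝ) *
    Complex.exp (-2 * Real.pi * Complex.I * ((j : ℕ) : ℂ) * ((k : ℕ) : ℂ) / (D : ℂ))

/-- Distance between two one-sided symbol sequences: `D^{-n₀}` where `n₀` is the first
index of disagreement (and `0` if the sequences coincide). -/
noncomputable def seqDist (D : ℕ) (u v : ℕ → Fin D) : ℝ :=
  if u = v then 0 else (D : ℝ) ^ (-((sInf {n : ℕ | u n ≠ v n} : ℕ) : ℤ))

/-- The metric `d_Σ` on `Σ = Z_D^{ℕ*} × Z_D^{ℕ*}`; a point `x = (ε', ε)` consists of its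
past sequence `x.1` and its future sequence `x.2`. -/
noncomputable def symbDist (D : ℕ) (x y : (ℕ → Fin D) × (ℕ → Fin D)) : ℝ :=
  max (seqDist D x.1 y.1) (seqDist D x.2 y.2)

/-- The `D`-nary digit sequence of a real number `x`. -/
noncomputable def digitFun (D : ℕ) (hD : 0 < D) (x : ℝ) : ℕ → Fin D :=
  fun n => ⟨(⌊x * (D : ℝ) ^ (n + 1)⌋.toNat) % D, Nat.mod_lt _ hD⟩

/-- The uniform Bernoulli measure on one-sided sequences, realized as the image of
Lebesgue measure on `[0,1)` under the digit map. -/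
noncomputable def digitMeasure (D : ℕ) (hD : 0 < D) : Measure (ℕ → Fin D) :=
  Measure.map (digitFun D hD) (volume.restrict (Set.Ico (0 : ℝ) 1))

/-- The natural (Lebesgue) measure on the two-sided symbol space `Σ`. -/
noncomputable def symbMeasure (D : ℕ) (hD : 0 < D) :
    Measure ((ℕ → Fin D) × (ℕ → Fin D)) :=
  (digitMeasure D hD).prod (digitMeasure D hD)

/-- The quantum rectangle `[ε'·ε] ⊂ Σ` associated with words `ε` of length `ℓ` and `ε'`
of length `k - ℓ`. -/
def rectSet (D k ℓ : ℕ) (R : (Fin ℓ → Fin D) × (Fin (k - ℓ) → Fin D)) :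
    Set ((ℕ → Fin D) × (ℕ → Fin D)) :=
  {x | (∀ i : Fin ℓ, x.2 (i : ℕ) = R.1 i) ∧ ∀ i : Fin (k - ℓ), x.1 (i : ℕ) = R.2 i}

/-- The Walsh coherent state `|ε'·ε⟩ = e_{ε₁} ⊗ … ⊗ e_{ε_ℓ} ⊗ F* e_{ε'_{k-ℓ}} ⊗ … ⊗ F* e_{ε'₁}`
attached to a quantum rectangle. -/
noncomputable def coherent (D k ℓ : ℕ) (hℓ : ℓ ≤ k)
    (R : (Fin ℓ → Fin D) × (Fin (k - ℓ) → Fin D)) : (Fin k → Fin D) → ℂ :=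
  fun s => (∏ i : Fin ℓ, if s (Fin.castLE hℓ i) = R.1 i then 1 else 0) *
    ∏ j : Fin (k - ℓ), ((dft D)ᴴ) (s ⟨ℓ + (j : ℕ), by have := j.2; omega⟩) (R.2 j.rev)

/-- The average `f̄^R` of an observable over a quantum rectangle (of measure `D^{-k}`). -/
noncomputable def rectAvg (D k ℓ : ℕ) (hD : 0 < D)
    (f : (ℕ → Fin D) × (ℕ → Fin D) → ℂ)
    (R : (Fin ℓ → Fin D) × (Fin (k - ℓ) → Fin D)) : ℂ :=
  (D : ℂ) ^ k * ∫ x in rectSet D k ℓ R, f x ∂(symbMeasure D hD)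

/-- The Walsh anti-Wick quantization `Op_{k,ℓ}(f) = ∑_R f̄^R |R⟩⟨R|`. -/
noncomputable def antiWick (D k ℓ : ℕ) (hD : 0 < D) (hℓ : ℓ ≤ k)
    (f : (ℕ → Fin D) × (ℕ → Fin D) → ℂ) :
    Matrix (Fin k → Fin D) (Fin k → Fin D) ℂ :=
  ∑ R : (Fin ℓ → Fin D) × (Fin (k - ℓ) → Fin D),
    rectAvg D k ℓ hD f R •
      Matrix.vecMulVec (coherent D k ℓ hℓ R) (star (coherent D k ℓ hℓ R))

lemma sum_exp_int (D : ℕ) (hD : 0 < D) (t : ℤ) (ht : ¬ ((D:ℤ) ∣ t)) :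
    ∑ x : Fin D, Complex.exp (2 * Real.pi * Complex.I * (t : ℂ) * (x : ℕ) / D) = 0 := by
  have hD0 : (D : ℂ) ≠ 0 := by exact_mod_cast hD.ne'
  set z : ℂ := Complex.exp (2 * Real.pi * Complex.I * t / D) with hz
  have hzx : ∀ x : ℕ, Complex.exp (2 * Real.pi * Complex.I * (t:ℂ) * x / D) = z ^ x := by
    intro x
    rw [hz, ← Complex.exp_nat_mul]
    ring_nf
  have h2 : (2 : ℂ) * Real.pi * Complex.I ≠ 0 := by
    simp [Real.pi_ne_zero, Complex.I_ne_zero]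
  have hz1 : z ≠ 1 := by
    intro h
    rw [Complex.exp_eq_one_iff] at h
    obtain ⟨n, hn⟩ := h
    apply ht
    refine ⟨n, ?_⟩
    have hC : (t : ℂ) = (D : ℂ) * n := by
      apply mul_left_cancel₀ h2
      field_simp at hn
      linear_combination (2 * Real.pi * Complex.I) * hn
    exact_mod_cast hC
  have hzD : z ^ D = 1 := by
    rw [← Complex.exp_nat_mul]
    have : (D : ℂ) * (2 * Real.pi * Complex.I * t / D) = t * (2 * Real.pi * Complex.I) := by
      field_simp
    rw [this, Complex.exp_int_mul_two_pi_mul_I]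
  calc ∑ x : Fin D, Complex.exp (2 * Real.pi * Complex.I * (t:ℂ) * (x:ℕ) / D)
      = ∑ x : Fin D, z ^ (x : ℕ) := by simp_rw [hzx]
    _ = ∑ x ∈ Finset.range D, z ^ x := (Fin.sum_univ_eq_sum_range _ _)
    _ = (z ^ D - 1) / (z - 1) := geom_sum_eq hz1 D
    _ = 0 := by rw [hzD]; simp

lemma dft_ortho {D : ℕ} (hD : 0 < D) (a b : Fin D) :
    ∑ x : Fin D, dft D a x * (starRingEnd ℂ) (dft D b x) = if a = b then 1 else 0 := by
  have hD0 : (D : ℂ) ≠ 0 := by exact_mod_cast hD.ne'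
  have hterm : ∀ x : Fin D, dft D a x * (starRingEnd ℂ) (dft D b x)
      = (1 / (D:ℂ)) * Complex.exp (2 * Real.pi * Complex.I * ((((b:ℤ) - (a:ℤ)) : ℤ) : ℂ) * (x:ℕ) / D) := by
    intro x
    unfold dft
    rw [map_mul, ← Complex.exp_conj]
    have h1 : (starRingEnd ℂ) ((1 / Real.sqrt D : ℝ) : ℂ) = ((1 / Real.sqrt D : ℝ) : ℂ) :=
      Complex.conj_ofReal _
    have h2 : (starRingEnd ℂ) (-2 * Real.pi * Complex.I * ((b : ℕ) : ℂ) * ((x : ℕ) : ℂ) / (D : ℂ))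
        = 2 * Real.pi * Complex.I * ((b : ℕ) : ℂ) * ((x : ℕ) : ℂ) / (D : ℂ) := by
      simp only [map_div₀, map_mul, map_neg, map_ofNat, Complex.conj_I, Complex.conj_ofReal,
        Complex.conj_natCast]
      ring
    rw [h1, h2]
    have h3 : ((1 / Real.sqrt D : ℝ) : ℂ) * ((1 / Real.sqrt D : ℝ) : ℂ) = 1 / (D:ℂ) := by
      rw [← Complex.ofReal_mul]
      have : (1 / Real.sqrt D) * (1 / Real.sqrt D) = 1 / (D:ℝ) := by
        rw [div_mul_div_comm, one_mul, Real.mul_self_sqrt (by positivity)]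
      rw [this]
      push_cast
      ring
    have h4 : Complex.exp (-2 * Real.pi * Complex.I * ((a : ℕ) : ℂ) * ((x : ℕ) : ℂ) / (D : ℂ)) *
        Complex.exp (2 * Real.pi * Complex.I * ((b : ℕ) : ℂ) * ((x : ℕ) : ℂ) / (D : ℂ))
        = Complex.exp (2 * Real.pi * Complex.I * ((((b:ℤ) - (a:ℤ)) : ℤ) : ℂ) * (x:ℕ) / D) := by
      rw [← Complex.exp_add]
      congr 1
      push_cast
      field_simp
      ring
    calc ((1 / Real.sqrt D : ℝ) : ℂ) * Complex.exp (-2 * Real.pi * Complex.I * ((a : ℕ) : ℂ) * ((x : ℕ) : ℂ) / (D : ℂ)) *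
          (((1 / Real.sqrt D : ℝ) : ℂ) * Complex.exp (2 * Real.pi * Complex.I * ((b : ℕ) : ℂ) * ((x : ℕ) : ℂ) / (D : ℂ)))
        = (((1 / Real.sqrt D : ℝ) : ℂ) * ((1 / Real.sqrt D : ℝ) : ℂ)) *
            (Complex.exp (-2 * Real.pi * Complex.I * ((a : ℕ) : ℂ) * ((x : ℕ) : ℂ) / (D : ℂ)) *
             Complex.exp (2 * Real.pi * Complex.I * ((b : ℕ) : ℂ) * ((x : ℕ) : ℂ) / (D : ℂ))) := by ring
      _ = (1 / (D:ℂ)) * Complex.exp (2 * Real.pi * Complex.I * ((((b:ℤ) - (a:ℤ)) : ℤ) : ℂ) * (x:ℕ) / D) := by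
          rw [h3, h4]
  simp_rw [hterm]
  rw [← Finset.mul_sum]
  by_cases hab : a = b
  · subst hab
    simp [hD0, Finset.card_univ]
  · have ht : ¬ ((D:ℤ) ∣ ((b:ℤ) - (a:ℤ))) := by
      intro hdvd
      have h0 : (b:ℤ) - (a:ℤ) = 0 := by
        refine Int.eq_zero_of_abs_lt_dvd hdvd ?_
        have hb := b.2
        have ha := a.2
        rw [abs_lt]
        omega
      exact hab (Fin.ext (by omega))
    rw [if_neg hab, sum_exp_int D hD _ ht, mul_zero]

def splitEquiv (D k ℓ : ℕ) (hℓ : ℓ ≤ k) :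
    ((Fin ℓ → Fin D) × (Fin (k - ℓ) → Fin D)) ≃ (Fin k → Fin D) where
  toFun p := fun s => if h : (s : ℕ) < ℓ then p.1 ⟨s, h⟩ else p.2 ⟨(s : ℕ) - ℓ, by have := s.2; omega⟩
  invFun s := (fun i => s (Fin.castLE hℓ i), fun j => s ⟨ℓ + (j : ℕ), by have := j.2; omega⟩)
  left_inv p := by
    obtain ⟨a, b⟩ := p
    refine Prod.ext ?_ ?_ <;> funext i
    · have h : ((Fin.castLE hℓ i : Fin k) : ℕ) < ℓ := by simpa using i.2
      simp only [dif_pos h]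
      exact congrArg a (Fin.ext rfl)
    · have h : ¬ (ℓ + (i : ℕ) < ℓ) := by omega
      simp only [dif_neg h]
      exact congrArg b (Fin.ext (by simp))
  right_inv s := by
    funext i
    by_cases h : (i : ℕ) < ℓ
    · simp only [dif_pos h]
      exact congrArg s (Fin.ext rfl)
    · simp only [dif_neg h]
      exact congrArg s (Fin.ext (by simp; omega))

lemma coherent_splitEquiv {D k ℓ : ℕ} (hℓ : ℓ ≤ k)
    (R : (Fin ℓ → Fin D) × (Fin (k - ℓ) → Fin D))
    (a : Fin ℓ → Fin D) (b : Fin (k - ℓ) → Fin D) :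
    coherent D k ℓ hℓ R (splitEquiv D k ℓ hℓ (a, b)) =
      (∏ i : Fin ℓ, if a i = R.1 i then 1 else 0) *
        ∏ j : Fin (k - ℓ), ((dft D)ᴴ) (b j) (R.2 j.rev) := by
  unfold coherent
  congr 1
  · refine Finset.prod_congr rfl fun i _ => ?_
    have h : ((Fin.castLE hℓ i : Fin k) : ℕ) < ℓ := by simpa using i.2
    rw [show (splitEquiv D k ℓ hℓ (a, b)) (Fin.castLE hℓ i) = a i by
      simp only [splitEquiv, Equiv.coe_fn_mk, dif_pos h]
      exact congrArg a (Fin.ext rfl)]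
  · refine Finset.prod_congr rfl fun j _ => ?_
    have h : ¬ (((⟨ℓ + (j : ℕ), by have := j.2; omega⟩ : Fin k) : ℕ) < ℓ) := by simp
    congr 1
    simp only [splitEquiv, Equiv.coe_fn_mk, dif_neg h]
    congr 1
    exact Fin.ext (by simp)

lemma ite_one_zero_mul (p q : Prop) [Decidable p] [Decidable q] :
    (if p then (1:ℂ) else 0) * (if q then 1 else 0) = if p ∧ q then 1 else 0 := by
  split_ifs <;> simp_all

set_option maxHeartbeats 1000000 in
lemma coherent_dot {D k ℓ : ℕ} (hD : 0 < D) (hℓ : ℓ ≤ k)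
    (R R' : (Fin ℓ → Fin D) × (Fin (k - ℓ) → Fin D)) :
    star (coherent D k ℓ hℓ R) ⬝ᵥ coherent D k ℓ hℓ R' = if R = R' then 1 else 0 := by
  classical
  unfold dotProduct
  rw [← Equiv.sum_comp (splitEquiv D k ℓ hℓ) (fun s => star (coherent D k ℓ hℓ R) s * coherent D k ℓ hℓ R' s)]
  rw [Fintype.sum_prod_type]
  have hterm : ∀ (a : Fin ℓ → Fin D) (b : Fin (k - ℓ) → Fin D),
      star (coherent D k ℓ hℓ R) (splitEquiv D k ℓ hℓ (a, b)) *
        coherent D k ℓ hℓ R' (splitEquiv D k ℓ hℓ (a, b)) =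
      ((∏ i : Fin ℓ, if a i = R.1 i ∧ a i = R'.1 i then (1:ℂ) else 0)) *
        (∏ j : Fin (k - ℓ),
          ((starRingEnd ℂ) (((dft D)ᴴ) (b j) (R.2 j.rev)) * ((dft D)ᴴ) (b j) (R'.2 j.rev))) := by
    intro a b
    rw [Pi.star_apply, coherent_splitEquiv, coherent_splitEquiv]
    rw [star_mul']
    have hconjprod : star (∏ i : Fin ℓ, if a i = R.1 i then (1:ℂ) else 0)
        = ∏ i : Fin ℓ, if a i = R.1 i then (1:ℂ) else 0 := by
      rw [star_prod]
      refine Finset.prod_congr rfl fun i _ => ?_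
      split_ifs <;> simp
    rw [hconjprod]
    have hconjprod2 : star (∏ j : Fin (k-ℓ), ((dft D)ᴴ) (b j) (R.2 j.rev))
        = ∏ j : Fin (k-ℓ), (starRingEnd ℂ) (((dft D)ᴴ) (b j) (R.2 j.rev)) := by
      rw [star_prod]; rfl
    rw [hconjprod2, mul_mul_mul_comm, ← Finset.prod_mul_distrib, ← Finset.prod_mul_distrib]
    congr 1
    refine Finset.prod_congr rfl fun i _ => ?_
    exact ite_one_zero_mul _ _
  simp_rw [hterm]
  rw [← Finset.sum_mul_sum]
  have hA : (∑ a : Fin ℓ → Fin D, ∏ i : Fin ℓ, if a i = R.1 i ∧ a i = R'.1 i then (1:ℂ) else 0)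
      = if R.1 = R'.1 then 1 else 0 := by
    have h1 : ∀ a : Fin ℓ → Fin D,
        (∏ i : Fin ℓ, if a i = R.1 i ∧ a i = R'.1 i then (1:ℂ) else 0)
          = if (∀ i, a i = R.1 i ∧ a i = R'.1 i) then 1 else 0 := by
      intro a
      rw [Finset.prod_boole]
      simp
    simp_rw [h1]
    by_cases h : R.1 = R'.1
    · rw [h, if_pos rfl]
      have h2 : ∀ a : Fin ℓ → Fin D, (∀ i, a i = R'.1 i ∧ a i = R'.1 i) ↔ a = R'.1 := by
        intro a
        constructor
        · intro ha; funext i; exact (ha i).1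
        · intro ha; subst ha; exact fun i => ⟨rfl, rfl⟩
      simp_rw [h2]
      simp
    · rw [if_neg h]
      refine Finset.sum_eq_zero fun a _ => ?_
      rw [if_neg]
      intro ha
      exact h (funext fun i => ((ha i).1).symm.trans (ha i).2)
  have hB : (∑ b : Fin (k-ℓ) → Fin D, ∏ j : Fin (k-ℓ),
        ((starRingEnd ℂ) (((dft D)ᴴ) (b j) (R.2 j.rev)) * ((dft D)ᴴ) (b j) (R'.2 j.rev)))
      = if R.2 = R'.2 then 1 else 0 := by
    have hx : ∀ (c c' : Fin D) (x : Fin D),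
        (starRingEnd ℂ) (((dft D)ᴴ) x c) * ((dft D)ᴴ) x c'
          = dft D c x * (starRingEnd ℂ) (dft D c' x) := by
      intro c c' x
      simp only [Matrix.conjTranspose_apply, Complex.star_def, Complex.conj_conj]
    calc (∑ b : Fin (k-ℓ) → Fin D, ∏ j : Fin (k-ℓ),
          ((starRingEnd ℂ) (((dft D)ᴴ) (b j) (R.2 j.rev)) * ((dft D)ᴴ) (b j) (R'.2 j.rev)))
        = ∑ b ∈ Fintype.piFinset (fun _ : Fin (k-ℓ) => (Finset.univ : Finset (Fin D))),
            ∏ j : Fin (k-ℓ),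
              ((starRingEnd ℂ) (((dft D)ᴴ) (b j) (R.2 j.rev)) * ((dft D)ᴴ) (b j) (R'.2 j.rev)) := by
          rw [Fintype.piFinset_univ]
      _ = ∏ j : Fin (k-ℓ), ∑ x : Fin D,
            ((starRingEnd ℂ) (((dft D)ᴴ) x (R.2 j.rev)) * ((dft D)ᴴ) x (R'.2 j.rev)) :=
          (Finset.prod_univ_sum (fun _ : Fin (k-ℓ) => (Finset.univ : Finset (Fin D)))
            (fun j x => (starRingEnd ℂ) (((dft D)ᴴ) x (R.2 j.rev)) * ((dft D)ᴴ) x (R'.2 j.rev))).symm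
      _ = ∏ j : Fin (k-ℓ), if R.2 j.rev = R'.2 j.rev then (1:ℂ) else 0 := by
          refine Finset.prod_congr rfl fun j _ => ?_
          simp_rw [hx]
          exact dft_ortho hD _ _
      _ = if (∀ j : Fin (k-ℓ), R.2 j.rev = R'.2 j.rev) then 1 else 0 := by
          rw [Finset.prod_boole]
          simp
      _ = if R.2 = R'.2 then 1 else 0 := by
          congr 1
          simp only [eq_iff_iff]
          constructor
          · intro hj
            funext j
            have := hj j.rev
            simpa using this
          · intro h j
            rw [h]
  rw [hA, hB, ite_one_zero_mul]
  congr 1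
  simp [Prod.ext_iff]

lemma vecMulVec_mulVec {n : Type*} [Fintype n] (u v w : n → ℂ) :
    (Matrix.vecMulVec u v).mulVec w = (v ⬝ᵥ w) • u := by
  funext i
  simp only [Matrix.mulVec, Matrix.vecMulVec_apply, dotProduct, Pi.smul_apply,
    smul_eq_mul, Finset.sum_mul]
  exact Finset.sum_congr rfl fun j _ => by ring

lemma vecMulVec_mul_vecMulVec {n : Type*} [Fintype n] (u v u' v' : n → ℂ) :
    Matrix.vecMulVec u v * Matrix.vecMulVec u' v' = (v ⬝ᵥ u') • Matrix.vecMulVec u v' := by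
  ext i j
  simp only [Matrix.mul_apply, Matrix.vecMulVec_apply, Matrix.smul_apply, dotProduct,
    smul_eq_mul, Finset.sum_mul]
  exact Finset.sum_congr rfl fun x _ => by ring

lemma trace_vecMulVec {n : Type*} [Fintype n] (u v : n → ℂ) :
    Matrix.trace (Matrix.vecMulVec u v) = v ⬝ᵥ u := by
  simp only [Matrix.trace, Matrix.diag_apply, Matrix.vecMulVec_apply, dotProduct]
  exact Finset.sum_congr rfl fun x _ => by ring

lemma conjTranspose_vecMulVec {n : Type*} [Fintype n] (u v : n → ℂ) :
    (Matrix.vecMulVec u v)ᴴ = Matrix.vecMulVec (star v) (star u) := by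
  ext i j
  simp only [Matrix.conjTranspose_apply, Matrix.vecMulVec_apply, star_mul', Pi.star_apply]
  exact mul_comm _ _

/-- cylinder set -/
def cylSet (D m : ℕ) (w : Fin m → Fin D) : Set (ℕ → Fin D) :=
  {u | ∀ i : Fin m, u (i : ℕ) = w i}

lemma measurable_digitFun (D : ℕ) (hD : 0 < D) : Measurable (digitFun D hD) := by
  apply measurable_pi_lambda
  intro n
  have h1 : Measurable fun x : ℝ => ⌊x * (D : ℝ) ^ (n + 1)⌋ :=
    (measurable_id.mul_const _).floor
  exact (measurable_from_top (f := fun z : ℤ =>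
    (⟨z.toNat % D, Nat.mod_lt _ hD⟩ : Fin D))).comp h1

lemma measurableSet_cylSet (D m : ℕ) (w : Fin m → Fin D) :
    MeasurableSet (cylSet D m w) := by
  have : cylSet D m w = ⋂ i : Fin m, (fun u : ℕ → Fin D => u (i : ℕ)) ⁻¹' {w i} := by
    ext u; simp [cylSet]
  rw [this]
  exact MeasurableSet.iInter fun i => (measurable_pi_apply _) (measurableSet_singleton _)

/-- value of a word as integer in base D, most significant first -/
def wordVal (D m : ℕ) (w : Fin m → Fin D) : ℕ :=
  ∑ i : Fin m, (w i : ℕ) * D ^ (m - 1 - (i : ℕ))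

lemma wordVal_eq (D m : ℕ) (w : Fin m → Fin D) :
    wordVal D m w = (finFunctionFinEquiv (fun j : Fin m => w j.rev) : ℕ) := by
  rw [finFunctionFinEquiv_apply, wordVal]
  refine Fintype.sum_equiv (Fin.revPerm) _ _ fun i => ?_
  simp only [Fin.revPerm_apply, Fin.rev_rev]
  congr 1
  rw [Fin.val_rev]
  congr 1
  omega

lemma wordVal_lt (D m : ℕ) (hD : 0 < D) (w : Fin m → Fin D) :
    wordVal D m w < D ^ m := by
  rw [wordVal_eq]
  exact (finFunctionFinEquiv (fun j : Fin m => w j.rev)).2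

lemma wordVal_injective (D m : ℕ) : Function.Injective (wordVal D m) := by
  intro w w' h
  rw [wordVal_eq, wordVal_eq] at h
  have h2 : (fun j : Fin m => w j.rev) = fun j : Fin m => w' j.rev := by
    apply finFunctionFinEquiv.injective
    exact Fin.ext h
  funext i
  have := congrFun h2 i.rev
  simpa [Fin.rev_rev] using this

lemma floor_digit_eq (D : ℕ) (hD : 0 < D) (x : ℝ) (hx : x ∈ Set.Ico (0:ℝ) 1) :
    ∀ m : ℕ, ⌊x * (D : ℝ) ^ m⌋ = (wordVal D m (fun i : Fin m => digitFun D hD x (i : ℕ)) : ℤ) := by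
  obtain ⟨hx0, hx1⟩ := hx
  have hDR : (0:ℝ) < (D:ℝ) := by exact_mod_cast hD
  intro m
  induction m with
  | zero =>
    simp [wordVal, Int.floor_eq_zero_iff, hx0, hx1]
  | succ m ih =>
    set q : ℤ := ⌊x * (D : ℝ) ^ m⌋ with hq
    set N : ℤ := ⌊x * (D : ℝ) ^ (m + 1)⌋ with hN
    have hpow : (0:ℝ) < (D:ℝ) ^ m := by positivity
    have hql : (q : ℝ) ≤ x * (D:ℝ)^m := Int.floor_le _
    have hqu : x * (D:ℝ)^m < q + 1 := Int.lt_floor_add_one _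
    have hlow : (D:ℤ) * q ≤ N := by
      rw [hN]
      apply Int.le_floor.2
      push_cast
      calc ((D:ℝ) * q) ≤ (D:ℝ) * (x * (D:ℝ)^m) := by
            apply mul_le_mul_of_nonneg_left hql (le_of_lt hDR)
        _ = x * (D:ℝ)^(m+1) := by ring
    have hhigh : N < (D:ℤ) * q + D := by
      rw [hN]
      apply Int.floor_lt.2
      push_cast
      calc x * (D:ℝ)^(m+1) = (D:ℝ) * (x * (D:ℝ)^m) := by ring
        _ < (D:ℝ) * (q + 1) := by
            apply mul_lt_mul_of_pos_left hqu hDR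
        _ = (D:ℝ) * q + D := by ring
    have hN0 : 0 ≤ N := by
      rw [hN]
      apply Int.le_floor.2
      push_cast
      exact mul_nonneg hx0 (by positivity)
    have hdig : ((digitFun D hD x m : ℕ) : ℤ) = N - (D:ℤ) * q := by
      have h1 : ((digitFun D hD x m : ℕ) : ℤ) = ((N.toNat % D : ℕ) : ℤ) := by
        simp [digitFun, hN]
      rw [h1]
      push_cast
      rw [Int.toNat_of_nonneg hN0]
      have h3 : (N - (D:ℤ)*q) % (D:ℤ) = N - (D:ℤ)*q :=
        Int.emod_eq_of_lt (by omega) (by omega)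
      have h4 : N % (D:ℤ) = (N - (D:ℤ)*q) % (D:ℤ) := by
        conv_lhs => rw [show N = (N - (D:ℤ)*q) + (D:ℤ)*q by ring]
        rw [Int.add_mul_emod_self_left]
      rw [h4, h3]
    have hword : (wordVal D (m+1) (fun i : Fin (m+1) => digitFun D hD x (i : ℕ)) : ℤ)
        = (D:ℤ) * (wordVal D m (fun i : Fin m => digitFun D hD x (i : ℕ)) : ℤ)
          + ((digitFun D hD x m : ℕ) : ℤ) := by
      have : wordVal D (m+1) (fun i : Fin (m+1) => digitFun D hD x (i : ℕ))
          = D * wordVal D m (fun i : Fin m => digitFun D hD x (i : ℕ))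
            + (digitFun D hD x m : ℕ) := by
        unfold wordVal
        rw [Fin.sum_univ_castSucc]
        simp only [Fin.coe_castSucc, Fin.val_last]
        rw [Finset.mul_sum]
        have hlast : (m + 1 - 1 - m) = 0 := by omega
        rw [hlast, pow_zero, mul_one]
        congr 1
        refine Finset.sum_congr rfl fun i _ => ?_
        have hi := i.2
        have hexp : m + 1 - 1 - (i:ℕ) = (m - 1 - (i:ℕ)) + 1 := by omega
        rw [hexp, pow_succ]
        ring
      exact_mod_cast congrArg (Nat.cast : ℕ → ℤ) this
    rw [hword, ← ih, hdig]
    ring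

lemma digit_preimage_Ico (D m : ℕ) (hD : 0 < D) (w : Fin m → Fin D) :
    (digitFun D hD) ⁻¹' (cylSet D m w) ∩ Set.Ico (0:ℝ) 1
      = Set.Ico ((wordVal D m w : ℝ) / (D:ℝ)^m) (((wordVal D m w : ℝ) + 1) / (D:ℝ)^m) := by
  have hpow : (0:ℝ) < (D:ℝ)^m := by positivity
  have hsub : ∀ w' : Fin m → Fin D, (digitFun D hD) ⁻¹' (cylSet D m w') ∩ Set.Ico (0:ℝ) 1
      ⊆ Set.Ico ((wordVal D m w' : ℝ) / (D:ℝ)^m) (((wordVal D m w' : ℝ) + 1) / (D:ℝ)^m) := by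
    intro w' x hx
    obtain ⟨hpre, hx01⟩ := hx
    have hfl := floor_digit_eq D hD x hx01 m
    have hww : (fun i : Fin m => digitFun D hD x (i:ℕ)) = w' := by
      funext i
      exact hpre i
    rw [hww] at hfl
    have h1 : (wordVal D m w' : ℝ) ≤ x * (D:ℝ)^m := by
      have := Int.floor_le (x * (D:ℝ)^m)
      rw [hfl] at this
      exact_mod_cast this
    have h2 : x * (D:ℝ)^m < (wordVal D m w' : ℝ) + 1 := by
      have := Int.lt_floor_add_one (x * (D:ℝ)^m)
      rw [hfl] at this
      exact_mod_cast this
    constructor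
    · rw [div_le_iff₀ hpow]
      linarith
    · rw [lt_div_iff₀ hpow]
      linarith
  refine Set.Subset.antisymm (hsub w) ?_
  intro x hx
  obtain ⟨h1, h2⟩ := hx
  rw [div_le_iff₀ hpow] at h1
  rw [lt_div_iff₀ hpow] at h2
  have hx01 : x ∈ Set.Ico (0:ℝ) 1 := by
    constructor
    · nlinarith [Nat.cast_nonneg (α := ℝ) (wordVal D m w)]
    · have hlt := wordVal_lt D m hD w
      have : (wordVal D m w : ℝ) + 1 ≤ (D:ℝ)^m := by
        have : (wordVal D m w + 1 : ℕ) ≤ D^m := hlt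
        push_cast at this ⊢
        exact_mod_cast this
      nlinarith
  set w' : Fin m → Fin D := fun i => digitFun D hD x (i:ℕ) with hw'
  have hxpre : x ∈ (digitFun D hD) ⁻¹' (cylSet D m w') ∩ Set.Ico (0:ℝ) 1 :=
    ⟨fun i => rfl, hx01⟩
  have hx2 := hsub w' hxpre
  obtain ⟨h1', h2'⟩ := hx2
  rw [div_le_iff₀ hpow] at h1'
  rw [lt_div_iff₀ hpow] at h2'
  have heq : wordVal D m w = wordVal D m w' := by
    have c1 : (wordVal D m w : ℝ) < (wordVal D m w' : ℝ) + 1 := by linarith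
    have c2 : (wordVal D m w' : ℝ) < (wordVal D m w : ℝ) + 1 := by linarith
    have c1' : wordVal D m w < wordVal D m w' + 1 := by exact_mod_cast c1
    have c2' : wordVal D m w' < wordVal D m w + 1 := by exact_mod_cast c2
    omega
  have hww' : w = w' := wordVal_injective D m heq
  rw [hww']
  exact hxpre

lemma digitMeasure_cylSet (D m : ℕ) (hD : 0 < D) (w : Fin m → Fin D) :
    digitMeasure D hD (cylSet D m w) = ENNReal.ofReal (1 / (D:ℝ)^m) := by
  have hpow : (0:ℝ) < (D:ℝ)^m := by positivity
  rw [digitMeasure, Measure.map_apply (measurable_digitFun D hD) (measurableSet_cylSet D m w)]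
  rw [Measure.restrict_apply ((measurable_digitFun D hD) (measurableSet_cylSet D m w))]
  rw [digit_preimage_Ico D m hD w]
  rw [Real.volume_Ico]
  congr 1
  field_simp
  ring

instance digitMeasure_prob (D : ℕ) (hD : 0 < D) : IsProbabilityMeasure (digitMeasure D hD) := by
  constructor
  rw [digitMeasure, Measure.map_apply (measurable_digitFun D hD) MeasurableSet.univ]
  simp [Real.volume_Ico]

instance symbMeasure_prob (D : ℕ) (hD : 0 < D) : IsProbabilityMeasure (symbMeasure D hD) := by
  rw [symbMeasure]
  infer_instance

lemma rectSet_eq_prod (D k ℓ : ℕ) (R : (Fin ℓ → Fin D) × (Fin (k - ℓ) → Fin D)) :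
    rectSet D k ℓ R = (cylSet D (k - ℓ) R.2) ×ˢ (cylSet D ℓ R.1) := by
  ext x
  simp only [rectSet, cylSet, Set.mem_setOf_eq, Set.mem_prod]
  tauto

lemma measurableSet_rectSet (D k ℓ : ℕ) (R : (Fin ℓ → Fin D) × (Fin (k - ℓ) → Fin D)) :
    MeasurableSet (rectSet D k ℓ R) := by
  rw [rectSet_eq_prod]
  exact (measurableSet_cylSet _ _ _).prod (measurableSet_cylSet _ _ _)

lemma symbMeasure_rectSet (D k ℓ : ℕ) (hD : 0 < D) (hℓ : ℓ ≤ k)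
    (R : (Fin ℓ → Fin D) × (Fin (k - ℓ) → Fin D)) :
    symbMeasure D hD (rectSet D k ℓ R) = ENNReal.ofReal (1 / (D:ℝ)^k) := by
  rw [rectSet_eq_prod, symbMeasure, Measure.prod_prod, digitMeasure_cylSet, digitMeasure_cylSet]
  rw [← ENNReal.ofReal_mul (by positivity)]
  congr 1
  rw [div_mul_div_comm, one_mul, ← pow_add]
  congr 2
  omega

lemma seqDist_le_of_agree {D : ℕ} (hD : 0 < D) (u v : ℕ → Fin D) (m : ℕ)
    (h : ∀ i, i < m → u i = v i) : seqDist D u v ≤ (D : ℝ) ^ (-(m : ℤ)) := by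
  have hD1 : (1:ℝ) ≤ (D:ℝ) := by exact_mod_cast hD
  unfold seqDist
  split_ifs with huv
  · positivity
  · apply zpow_le_zpow_right₀ hD1
    simp only [neg_le_neg_iff, Int.ofNat_le]
    apply le_csInf
    · rw [Set.nonempty_def]
      by_contra hc
      push_neg at hc
      exact huv (funext fun n => not_not.mp (hc n))
    · intro b hb
      by_contra hlt
      push_neg at hlt
      exact hb (h b hlt)

lemma seqDist_nonneg {D : ℕ} (u v : ℕ → Fin D) : 0 ≤ seqDist D u v := by
  unfold seqDist
  split_ifs
  · exact le_refl 0
  · positivity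

lemma seqDist_comm {D : ℕ} (u v : ℕ → Fin D) : seqDist D u v = seqDist D v u := by
  unfold seqDist
  have h1 : (u = v) = (v = u) := by simp [eq_comm]
  have h2 : {n : ℕ | u n ≠ v n} = {n : ℕ | v n ≠ u n} := by ext n; simp [ne_comm]
  rw [h1, h2]

lemma symbDist_comm {D : ℕ} (x y : (ℕ → Fin D) × (ℕ → Fin D)) :
    symbDist D x y = symbDist D y x := by
  unfold symbDist
  rw [seqDist_comm, seqDist_comm (u := x.2)]

lemma symbDist_nonneg {D : ℕ} (x y : (ℕ → Fin D) × (ℕ → Fin D)) :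
    0 ≤ symbDist D x y := le_trans (seqDist_nonneg x.1 y.1) (le_max_left _ _)

lemma lipschitz_continuous {D : ℕ} (hD : 2 ≤ D) (f : (ℕ → Fin D) × (ℕ → Fin D) → ℂ)
    (L : ℝ) (hL : 0 ≤ L) (hfl : ∀ x y, ‖f x - f y‖ ≤ L * symbDist D x y) :
    Continuous f := by
  rw [continuous_iff_continuousAt]
  intro x
  rw [ContinuousAt, Metric.tendsto_nhds]
  intro ε hε
  -- choose n
  have hD1 : (1:ℝ) < (D:ℝ) := by exact_mod_cast hD
  have hq : (1/(D:ℝ)) < 1 := by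
    rw [div_lt_one (by linarith)]; linarith
  have hq0 : (0:ℝ) ≤ 1/(D:ℝ) := by positivity
  obtain ⟨n, hn⟩ := exists_pow_lt_of_lt_one (show (0:ℝ) < ε/(L+1) by positivity) hq
  have hkey : L * (D:ℝ) ^ (-(n:ℤ)) < ε := by
    have h1 : (D:ℝ) ^ (-(n:ℤ)) = (1/(D:ℝ))^n := by
      rw [zpow_neg, zpow_natCast, one_div, inv_pow]
    rw [h1]
    calc L * (1/(D:ℝ))^n ≤ (L+1) * (1/(D:ℝ))^n := by
          apply mul_le_mul_of_nonneg_right (by linarith) (by positivity)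
      _ < (L+1) * (ε/(L+1)) := by
          apply mul_lt_mul_of_pos_left hn (by linarith)
      _ = ε := by field_simp
  have hev : ∀ᶠ y in nhds x, ∀ i : Fin n,
      y.1 (i:ℕ) = x.1 (i:ℕ) ∧ y.2 (i:ℕ) = x.2 (i:ℕ) := by
    rw [Filter.eventually_all]
    intro i
    have h1 : ContinuousAt (fun y : (ℕ → Fin D) × (ℕ → Fin D) => y.1 (i:ℕ)) x :=
      ((continuous_apply (i:ℕ)).comp continuous_fst).continuousAt
    have h2 : ContinuousAt (fun y : (ℕ → Fin D) × (ℕ → Fin D) => y.2 (i:ℕ)) x :=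
      ((continuous_apply (i:ℕ)).comp continuous_snd).continuousAt
    have hU1 : ({x.1 (i:ℕ)} : Set (Fin D)) ∈ nhds (x.1 (i:ℕ)) :=
      (isOpen_discrete _).mem_nhds rfl
    have hU2 : ({x.2 (i:ℕ)} : Set (Fin D)) ∈ nhds (x.2 (i:ℕ)) :=
      (isOpen_discrete _).mem_nhds rfl
    have e1 : ∀ᶠ y in nhds x, y.1 (i:ℕ) = x.1 (i:ℕ) := h1 hU1
    have e2 : ∀ᶠ y in nhds x, y.2 (i:ℕ) = x.2 (i:ℕ) := h2 hU2
    exact e1.and e2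
  refine hev.mono fun y hy => ?_
  have hd : symbDist D x y ≤ (D:ℝ) ^ (-(n:ℤ)) := by
    apply max_le
    · apply seqDist_le_of_agree (by omega) _ _ n
      intro i hi
      exact ((hy ⟨i, hi⟩).1).symm
    · apply seqDist_le_of_agree (by omega) _ _ n
      intro i hi
      exact ((hy ⟨i, hi⟩).2).symm
  calc dist (f y) (f x) = ‖f y - f x‖ := by rw [dist_eq_norm]
    _ ≤ L * symbDist D y x := hfl y x
    _ = L * symbDist D x y := by rw [symbDist_comm]
    _ ≤ L * (D:ℝ) ^ (-(n:ℤ)) := by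
        apply mul_le_mul_of_nonneg_left hd hL
    _ < ε := hkey

lemma lipschitz_measurable {D : ℕ} (hD : 0 < D) (f : (ℕ → Fin D) × (ℕ → Fin D) → ℂ)
    (L : ℝ) (hL : 0 ≤ L) (hfl : ∀ x y, ‖f x - f y‖ ≤ L * symbDist D x y) :
    Measurable f := by
  rcases eq_or_lt_of_le (Nat.one_le_iff_ne_zero.mpr hD.ne') with h1 | h2
  · -- D = 1
    have hsub : Subsingleton (Fin D) := by
      constructor
      intro a b
      apply Fin.ext
      omega
    have : Subsingleton ((ℕ → Fin D) × (ℕ → Fin D)) := by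
      constructor
      intro a b
      apply Prod.ext <;> funext n <;> exact Subsingleton.elim _ _
    exact Subsingleton.measurable
  · exact (lipschitz_continuous (by omega) f L hL hfl).measurable

lemma lipschitz_integrable {D : ℕ} (hD : 0 < D) (f : (ℕ → Fin D) × (ℕ → Fin D) → ℂ)
    (L : ℝ) (hb : ∀ x, ‖f x‖ ≤ L) (hm : Measurable f) :
    Integrable f (symbMeasure D hD) := by
  exact (integrable_const L).mono' hm.aestronglyMeasurable (Filter.Eventually.of_forall hb)

lemma symbDist_rectSet {D k ℓ : ℕ} (hD : 0 < D) (hℓ : ℓ ≤ k)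
    (R : (Fin ℓ → Fin D) × (Fin (k - ℓ) → Fin D))
    (x y : (ℕ → Fin D) × (ℕ → Fin D)) (hx : x ∈ rectSet D k ℓ R) (hy : y ∈ rectSet D k ℓ R) :
    symbDist D x y ≤ (D : ℝ) ^ (-((min ℓ (k - ℓ) : ℕ) : ℤ)) := by
  have hD1 : (1:ℝ) ≤ (D:ℝ) := by exact_mod_cast hD
  apply max_le
  · have ha : seqDist D x.1 y.1 ≤ (D:ℝ) ^ (-((k-ℓ : ℕ) : ℤ)) := by
      apply seqDist_le_of_agree hD
      intro i hi
      rw [hx.2 ⟨i, hi⟩, hy.2 ⟨i, hi⟩]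
    refine le_trans ha (zpow_le_zpow_right₀ hD1 ?_)
    simp only [neg_le_neg_iff, Int.ofNat_le]
    omega
  · have ha : seqDist D x.2 y.2 ≤ (D:ℝ) ^ (-(ℓ : ℤ)) := by
      apply seqDist_le_of_agree hD
      intro i hi
      rw [hx.1 ⟨i, hi⟩, hy.1 ⟨i, hi⟩]
    refine le_trans ha (zpow_le_zpow_right₀ hD1 ?_)
    simp only [neg_le_neg_iff]
    exact_mod_cast Nat.cast_le.mpr (min_le_left _ _)

lemma rectSet_measure_toReal {D k ℓ : ℕ} (hD : 0 < D) (hℓ : ℓ ≤ k)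
    (R : (Fin ℓ → Fin D) × (Fin (k - ℓ) → Fin D)) :
    ((symbMeasure D hD) (rectSet D k ℓ R)).toReal = 1 / (D:ℝ)^k := by
  rw [symbMeasure_rectSet D k ℓ hD hℓ R, ENNReal.toReal_ofReal (by positivity)]

lemma rectSet_measure_ne_top {D k ℓ : ℕ} (hD : 0 < D) (hℓ : ℓ ≤ k)
    (R : (Fin ℓ → Fin D) × (Fin (k - ℓ) → Fin D)) :
    (symbMeasure D hD) (rectSet D k ℓ R) < ⊤ := by
  rw [symbMeasure_rectSet D k ℓ hD hℓ R]
  exact ENNReal.ofReal_lt_top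

/-- main quantitative bound on rectangle averages -/
lemma rectAvg_bound {D k ℓ : ℕ} (hD : 0 < D) (hℓ : ℓ ≤ k)
    (f g : (ℕ → Fin D) × (ℕ → Fin D) → ℂ) (Lf Lg : ℝ)
    (hfb : ∀ x, ‖f x‖ ≤ Lf) (hfl : ∀ x y, ‖f x - f y‖ ≤ Lf * symbDist D x y)
    (hgb : ∀ x, ‖g x‖ ≤ Lg) (hgl : ∀ x y, ‖g x - g y‖ ≤ Lg * symbDist D x y)
    (R : (Fin ℓ → Fin D) × (Fin (k - ℓ) → Fin D)) :
    ‖rectAvg D k ℓ hD (fun x => f x * g x) R - rectAvg D k ℓ hD f R * rectAvg D k ℓ hD g R‖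
      ≤ Lf * Lg * (D : ℝ) ^ (-((min ℓ (k - ℓ) : ℕ) : ℤ)) := by
  have hx0 : Nonempty ((ℕ → Fin D) × (ℕ → Fin D)) :=
    ⟨(fun _ => ⟨0, hD⟩, fun _ => ⟨0, hD⟩)⟩
  obtain ⟨x0⟩ := hx0
  have hLf : 0 ≤ Lf := le_trans (norm_nonneg _) (hfb x0)
  have hLg : 0 ≤ Lg := le_trans (norm_nonneg _) (hgb x0)
  have hDk : (0:ℝ) < (D:ℝ)^k := by positivity
  set μ := symbMeasure D hD
  set S := rectSet D k ℓ R with hS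
  have hSm : MeasurableSet S := measurableSet_rectSet D k ℓ R
  have hμS : (μ S).toReal = 1 / (D:ℝ)^k := rectSet_measure_toReal hD hℓ R
  have hμSt : μ S < ⊤ := rectSet_measure_ne_top hD hℓ R
  have hfm : Measurable f := lipschitz_measurable hD f Lf hLf hfl
  have hgm : Measurable g := lipschitz_measurable hD g Lg hLg hgl
  have hfi : IntegrableOn f S μ := ((lipschitz_integrable hD f Lf hfb hfm).restrict)
  have hgi : IntegrableOn g S μ := ((lipschitz_integrable hD g Lg hgb hgm).restrict)
  have hfgm : Measurable (fun x => f x * g x) := hfm.mul hgm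
  have hfgi : IntegrableOn (fun x => f x * g x) S μ :=
    ((lipschitz_integrable hD _ (Lf * Lg)
      (fun x => by calc ‖f x * g x‖ = ‖f x‖ * ‖g x‖ := norm_mul _ _
                    _ ≤ Lf * Lg := mul_le_mul (hfb x) (hgb x) (norm_nonneg _) hLf) hfgm).restrict)
  set c : ℂ := rectAvg D k ℓ hD f R with hc
  set M0 : ℝ := (D : ℝ) ^ (-((min ℓ (k - ℓ) : ℕ) : ℤ)) with hM0
  have hM0pos : 0 < M0 := by positivity
  -- step 1 : pointwise bound on f - c on S
  have hstep1 : ∀ x ∈ S, ‖f x - c‖ ≤ Lf * M0 := by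
    intro x hx
    have h1 : f x - c = (D:ℂ)^k * ∫ y in S, (f x - f y) ∂μ := by
      rw [integral_sub (integrableOn_const (C := f x) hμSt.ne) hfi]
      rw [setIntegral_const, measureReal_def, hμS, Complex.real_smul, hc]
      unfold rectAvg
      rw [← hS]
      push_cast
      have hDk0 : ((D:ℂ))^k ≠ 0 := by
        apply pow_ne_zero
        exact_mod_cast hD.ne'
      field_simp
      rfl
    rw [h1]
    rw [norm_mul]
    have h2 : ‖(D:ℂ)^k‖ = (D:ℝ)^k := by
      rw [norm_pow, Complex.norm_natCast]
    rw [h2]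
    have h3 : ‖∫ y in S, (f x - f y) ∂μ‖ ≤ (Lf * M0) * (μ S).toReal := by
      refine norm_setIntegral_le_of_norm_le_const hμSt (fun y hy => ?_)
      calc ‖f x - f y‖ ≤ Lf * symbDist D x y := hfl x y
        _ ≤ Lf * M0 := mul_le_mul_of_nonneg_left (symbDist_rectSet hD hℓ R x y hx hy) hLf
    calc (D:ℝ)^k * ‖∫ y in S, (f x - f y) ∂μ‖ ≤ (D:ℝ)^k * ((Lf * M0) * (μ S).toReal) :=
          mul_le_mul_of_nonneg_left h3 (le_of_lt hDk)
      _ = Lf * M0 := by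
          rw [hμS]
          field_simp
  -- step 2 : identity
  have hstep2 : rectAvg D k ℓ hD (fun x => f x * g x) R - c * rectAvg D k ℓ hD g R
      = (D:ℂ)^k * ∫ y in S, ((f y - c) * g y) ∂μ := by
    have hint : ∫ y in S, ((f y - c) * g y) ∂μ
        = (∫ y in S, f y * g y ∂μ) - c * ∫ y in S, g y ∂μ := by
      have : ∀ y, (f y - c) * g y = f y * g y - c * g y := fun y => by ring
      simp_rw [this]
      rw [integral_sub hfgi (hgi.const_mul c), integral_const_mul]
    rw [hint]
    unfold rectAvg
    rw [← hS]
    ring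
  rw [hstep2, norm_mul]
  have h2 : ‖(D:ℂ)^k‖ = (D:ℝ)^k := by rw [norm_pow, Complex.norm_natCast]
  rw [h2]
  have h3 : ‖∫ y in S, ((f y - c) * g y) ∂μ‖ ≤ (Lf * M0 * Lg) * (μ S).toReal := by
    refine norm_setIntegral_le_of_norm_le_const hμSt (fun y hy => ?_)
    calc ‖(f y - c) * g y‖ = ‖f y - c‖ * ‖g y‖ := norm_mul _ _
      _ ≤ (Lf * M0) * Lg := by
          apply mul_le_mul (hstep1 y hy) (hgb y) (norm_nonneg _)
          positivity
  calc (D:ℝ)^k * ‖∫ y in S, ((f y - c) * g y) ∂μ‖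
      ≤ (D:ℝ)^k * ((Lf * M0 * Lg) * (μ S).toReal) := mul_le_mul_of_nonneg_left h3 (le_of_lt hDk)
    _ = Lf * Lg * M0 := by
        rw [hμS]
        field_simp

lemma opNorm_sum_scaled_proj {n ι : Type*} [Fintype n] [DecidableEq n] [Fintype ι] [DecidableEq ι]
    (v : ι → n → ℂ) (hv : ∀ i j, star (v i) ⬝ᵥ v j = if i = j then (1:ℂ) else 0)
    (c : ι → ℂ) (B : ℝ) (hB : 0 ≤ B) (hc : ∀ i, ‖c i‖ ≤ B) :
    ‖Matrix.toEuclideanCLM (𝕜 := ℂ)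
      (∑ i, c i • Matrix.vecMulVec (v i) (star (v i)))‖ ≤ B := by
  set u : ι → EuclideanSpace ℂ n := fun i => (WithLp.equiv 2 (n → ℂ)).symm (v i) with hu
  have hinner : ∀ (i : ι) (w : n → ℂ),
      (inner ℂ (u i) ((WithLp.equiv 2 (n → ℂ)).symm w) : ℂ) = star (v i) ⬝ᵥ w := by
    intro i w
    rw [PiLp.inner_apply]
    simp only [RCLike.inner_apply, dotProduct, Pi.star_apply]
    exact Finset.sum_congr rfl fun j _ => mul_comm _ _
  have hON : Orthonormal ℂ u := by
    rw [orthonormal_iff_ite]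
    intro i j
    rw [show u j = (WithLp.equiv 2 (n → ℂ)).symm (v j) from rfl, hinner, hv]
  apply ContinuousLinearMap.opNorm_le_bound _ hB
  intro y
  set x : n → ℂ := WithLp.equiv 2 (n → ℂ) y with hx
  have hy : y = (WithLp.equiv 2 (n → ℂ)).symm x := rfl
  set d : ι → ℂ := fun i => c i * (star (v i) ⬝ᵥ x) with hd
  have happ : Matrix.toEuclideanCLM (𝕜 := ℂ)
      (∑ i, c i • Matrix.vecMulVec (v i) (star (v i))) y = ∑ i, d i • u i := by
    rw [hy, Matrix.toEuclideanCLM_toLp]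
    have hmv : (∑ i, c i • Matrix.vecMulVec (v i) (star (v i))).mulVec x
        = ∑ i, d i • v i := by
      have hsum : (∑ i, c i • Matrix.vecMulVec (v i) (star (v i))) *ᵥ x
          = ∑ i, (c i • Matrix.vecMulVec (v i) (star (v i))) *ᵥ x := by
        funext j
        simp only [Matrix.mulVec, dotProduct, Finset.sum_apply, Matrix.sum_apply,
          Finset.sum_mul]
        rw [Finset.sum_comm]
      rw [hsum]
      refine Finset.sum_congr rfl fun i _ => ?_
      rw [Matrix.smul_mulVec, vecMulVec_mulVec, hd]
      rw [smul_smul]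
    change WithLp.toLp 2 ((∑ i, c i • Matrix.vecMulVec (v i) (star (v i))) *ᵥ x) = ∑ i, d i • u i
    rw [hmv]
    have : ((WithLp.equiv 2 (n → ℂ)).symm (∑ i, d i • v i) : EuclideanSpace ℂ n)
        = ∑ i, d i • u i := by
      rw [hu]
      simp only [WithLp.equiv_symm_apply, WithLp.toLp_sum, WithLp.toLp_smul]
    exact this
  rw [happ]
  have hinner2 : ∀ i, (inner ℂ (u i) y : ℂ) = star (v i) ⬝ᵥ x := fun i => hinner i x
  have hsq : ‖∑ i, d i • u i‖ ^ 2 = ∑ i, ‖d i‖ ^ 2 := by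
    have h1 : (inner ℂ (∑ i, d i • u i) (∑ i, d i • u i) : ℂ)
        = ∑ i, (starRingEnd ℂ) (d i) * d i := hON.inner_sum d d Finset.univ
    have h2 : (inner ℂ (∑ i, d i • u i) (∑ i, d i • u i) : ℂ)
        = ((‖∑ i, d i • u i‖ : ℝ) : ℂ) ^ 2 := inner_self_eq_norm_sq_to_K _
    have h3 : ∀ i : ι, (starRingEnd ℂ) (d i) * d i = ((‖d i‖ ^ 2 : ℝ) : ℂ) := by
      intro i
      rw [RCLike.conj_mul]
      norm_cast
    have h4 : ((‖∑ i, d i • u i‖ ^ 2 : ℝ) : ℂ) = ((∑ i, ‖d i‖ ^ 2 : ℝ) : ℂ) := by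
      push_cast
      rw [← h2, h1]
      exact Finset.sum_congr rfl fun i _ => by rw [h3]; push_cast; ring
    exact_mod_cast h4
  have hbound : ∑ i, ‖d i‖ ^ 2 ≤ B ^ 2 * ‖y‖ ^ 2 := by
    have h5 : ∀ i, ‖d i‖ ^ 2 ≤ B ^ 2 * ‖(inner ℂ (u i) y : ℂ)‖ ^ 2 := by
      intro i
      rw [hd]
      simp only []
      rw [← hinner2 i, norm_mul, mul_pow]
      apply mul_le_mul_of_nonneg_right _ (by positivity)
      exact pow_le_pow_left₀ (norm_nonneg _) (hc i) 2
    calc ∑ i, ‖d i‖ ^ 2 ≤ ∑ i, B ^ 2 * ‖(inner ℂ (u i) y : ℂ)‖ ^ 2 :=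
          Finset.sum_le_sum fun i _ => h5 i
      _ = B ^ 2 * ∑ i, ‖(inner ℂ (u i) y : ℂ)‖ ^ 2 := by rw [Finset.mul_sum]
      _ ≤ B ^ 2 * ‖y‖ ^ 2 := by
          apply mul_le_mul_of_nonneg_left _ (by positivity)
          exact hON.sum_inner_products_le y
  have hfin : ‖∑ i, d i • u i‖ ^ 2 ≤ (B * ‖y‖) ^ 2 := by
    rw [hsq, mul_pow]
    exact hbound
  have := Real.sqrt_le_sqrt hfin
  rw [Real.sqrt_sq (norm_nonneg _), Real.sqrt_sq (by positivity)] at this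
  exact this


lemma iUnion_rectSet (D k ℓ : ℕ) :
    (⋃ R : (Fin ℓ → Fin D) × (Fin (k - ℓ) → Fin D), rectSet D k ℓ R) = Set.univ := by
  ext x
  simp only [Set.mem_iUnion, Set.mem_univ, iff_true]
  exact ⟨(fun i => x.2 (i : ℕ), fun i => x.1 (i : ℕ)), fun i => rfl, fun i => rfl⟩

lemma rectSet_disjoint (D k ℓ : ℕ) {R R' : (Fin ℓ → Fin D) × (Fin (k - ℓ) → Fin D)}
    (h : R ≠ R') : Disjoint (rectSet D k ℓ R) (rectSet D k ℓ R') := by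
  rw [Set.disjoint_left]
  intro x hx hx'
  apply h
  refine Prod.ext (funext fun i => ?_) (funext fun i => ?_)
  · rw [← hx.1 i, hx'.1 i]
  · rw [← hx.2 i, hx'.2 i]

lemma sum_rect_integral {D k ℓ : ℕ} (hD : 0 < D)
    (f : (ℕ → Fin D) × (ℕ → Fin D) → ℂ) (hf : Integrable f (symbMeasure D hD)) :
    ∑ R : (Fin ℓ → Fin D) × (Fin (k - ℓ) → Fin D),
      ∫ x in rectSet D k ℓ R, f x ∂(symbMeasure D hD) = ∫ x, f x ∂(symbMeasure D hD) := by
  have h1 := MeasureTheory.integral_biUnion_finset (μ := symbMeasure D hD)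
    (Finset.univ : Finset ((Fin ℓ → Fin D) × (Fin (k - ℓ) → Fin D)))
    (fun R _ => measurableSet_rectSet D k ℓ R)
    (fun R _ R' _ h => rectSet_disjoint D k ℓ h)
    (fun R _ => hf.integrableOn)
  rw [← h1]
  have h2 : (⋃ R ∈ (Finset.univ : Finset ((Fin ℓ → Fin D) × (Fin (k - ℓ) → Fin D))),
      rectSet D k ℓ R) = Set.univ := by
    rw [← iUnion_rectSet D k ℓ]
    simp
  rw [h2, setIntegral_univ]

/-- Properties of the Walsh anti-Wick quantization: for Lipschitz observables `f, g` on the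
symbolic space `Σ` (with `Lf, Lg` bounding both the sup-norm and the Lipschitz constant, as
the Lipschitz norm `‖·‖_Lip` does),
`‖Op_{k,ℓ}(fg) − Op_{k,ℓ}(f) Op_{k,ℓ}(g)‖ ≤ ‖f‖_Lip ‖g‖_Lip D^{-min(ℓ, k-ℓ)}`;
moreover `Op_{k,ℓ}(f̄) = Op_{k,ℓ}(f)*` and `tr Op_{k,ℓ}(f) = D^k ∫ f dx`. -/
theorem antiWick_properties {D k ℓ : ℕ} (hD : 0 < D) (hℓ : ℓ ≤ k)
    (f g : (ℕ → Fin D) × (ℕ → Fin D) → ℂ) (Lf Lg : ℝ)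
    (hfb : ∀ x, ‖f x‖ ≤ Lf) (hfl : ∀ x y, ‖f x - f y‖ ≤ Lf * symbDist D x y)
    (hgb : ∀ x, ‖g x‖ ≤ Lg) (hgl : ∀ x y, ‖g x - g y‖ ≤ Lg * symbDist D x y) :
    ‖Matrix.toEuclideanCLM (𝕜 := ℂ)
        (antiWick D k ℓ hD hℓ (fun x => f x * g x) -
          antiWick D k ℓ hD hℓ f * antiWick D k ℓ hD hℓ g)‖ ≤
      Lf * Lg * (D : ℝ) ^ (-((min ℓ (k - ℓ) : ℕ) : ℝ)) ∧
    antiWick D k ℓ hD hℓ (fun x => (starRingEnd ℂ) (f x)) = (antiWick D k ℓ hD hℓ f)ᴴ ∧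
    Matrix.trace (antiWick D k ℓ hD hℓ f) =
      (D : ℂ) ^ k * ∫ x, f x ∂(symbMeasure D hD) := by
  classical
  have hx0 : Nonempty ((ℕ → Fin D) × (ℕ → Fin D)) :=
    ⟨(fun _ => ⟨0, hD⟩, fun _ => ⟨0, hD⟩)⟩
  obtain ⟨x0⟩ := hx0
  have hLf : 0 ≤ Lf := le_trans (norm_nonneg _) (hfb x0)
  have hLg : 0 ≤ Lg := le_trans (norm_nonneg _) (hgb x0)
  have hfm : Measurable f := lipschitz_measurable hD f Lf hLf hfl
  have hfi : Integrable f (symbMeasure D hD) := lipschitz_integrable hD f Lf hfb hfm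
  set v : ((Fin ℓ → Fin D) × (Fin (k - ℓ) → Fin D)) → (Fin k → Fin D) → ℂ :=
    coherent D k ℓ hℓ with hv
  set P : ((Fin ℓ → Fin D) × (Fin (k - ℓ) → Fin D)) → Matrix (Fin k → Fin D) (Fin k → Fin D) ℂ :=
    fun R => Matrix.vecMulVec (v R) (star (v R)) with hP
  refine ⟨?_, ?_, ?_⟩
  · -- norm bound
    have hprod : antiWick D k ℓ hD hℓ f * antiWick D k ℓ hD hℓ g
        = ∑ R, (rectAvg D k ℓ hD f R * rectAvg D k ℓ hD g R) • P R := by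
      unfold antiWick
      rw [Finset.sum_mul_sum]
      refine Finset.sum_congr rfl fun R _ => ?_
      have hterm : ∀ R', (rectAvg D k ℓ hD f R • P R) * (rectAvg D k ℓ hD g R' • P R')
          = if R' = R then (rectAvg D k ℓ hD f R * rectAvg D k ℓ hD g R') • P R else 0 := by
        intro R'
        rw [Matrix.smul_mul, Matrix.mul_smul, smul_smul]
        rw [hP]
        rw [vecMulVec_mul_vecMulVec]
        rw [coherent_dot hD hℓ R R']
        by_cases h : R' = R
        · subst h
          simp
        · have h2 : ¬ (R = R') := fun hh => h hh.symm
          simp [h, h2]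
      simp only [hP, hv] at hterm
      simp_rw [hterm]
      rw [Finset.sum_ite_eq' Finset.univ R
        (fun R' => (rectAvg D k ℓ hD f R * rectAvg D k ℓ hD g R') • P R)]
      simp
    set c : ((Fin ℓ → Fin D) × (Fin (k - ℓ) → Fin D)) → ℂ :=
      fun R => rectAvg D k ℓ hD (fun x => f x * g x) R
        - rectAvg D k ℓ hD f R * rectAvg D k ℓ hD g R with hcdef
    have hdiff : antiWick D k ℓ hD hℓ (fun x => f x * g x)
        - antiWick D k ℓ hD hℓ f * antiWick D k ℓ hD hℓ g = ∑ R, c R • P R := by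
      rw [hprod]
      unfold antiWick
      rw [← Finset.sum_sub_distrib]
      refine Finset.sum_congr rfl fun R _ => ?_
      rw [hcdef, sub_smul]
    rw [hdiff]
    set B : ℝ := Lf * Lg * (D:ℝ) ^ (-((min ℓ (k - ℓ) : ℕ) : ℤ)) with hB
    have hBnn : 0 ≤ B := by
      apply mul_nonneg (mul_nonneg hLf hLg)
      positivity
    have hvdot : ∀ i j, star (v i) ⬝ᵥ v j = if i = j then (1:ℂ) else 0 := by
      intro i j
      rw [hv]
      exact coherent_dot hD hℓ i j
    have hle := opNorm_sum_scaled_proj v hvdot c B hBnn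
      (fun R => rectAvg_bound hD hℓ f g Lf Lg hfb hfl hgb hgl R)
    have hpow : Lf * Lg * (D:ℝ) ^ (-((min ℓ (k - ℓ) : ℕ) : ℝ)) = B := by
      rw [hB]
      congr 1
      rw [show (-((min ℓ (k - ℓ) : ℕ) : ℝ)) = (((-((min ℓ (k - ℓ) : ℕ) : ℤ)) : ℤ) : ℝ) by
        push_cast; ring]
      rw [Real.rpow_intCast]
    rw [hpow]
    exact hle
  · -- adjoint
    unfold antiWick
    rw [Matrix.conjTranspose_sum]
    refine Finset.sum_congr rfl fun R _ => ?_
    rw [Matrix.conjTranspose_smul, conjTranspose_vecMulVec, star_star]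
    congr 1
    unfold rectAvg
    rw [integral_conj, star_mul']
    congr 1
    simp
  · -- trace
    unfold antiWick
    rw [Matrix.trace_sum]
    have htr : ∀ R, Matrix.trace (rectAvg D k ℓ hD f R • P R) = rectAvg D k ℓ hD f R := by
      intro R
      rw [Matrix.trace_smul, hP, trace_vecMulVec]
      rw [coherent_dot hD hℓ R R]
      simp
    simp only [hP, hv] at htr
    simp_rw [htr]
    unfold rectAvg
    rw [← Finset.mul_sum, sum_rect_integral hD f hfi]
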